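/- For multiplicative characters B, A, C of F_q and x ∈ F_q with x ≠ 1, ₂F₁[B,A;C;x] = C(-1)·B̄(1−x)·₂F₁[B, ĀC; C; x/(x−1)]. -/
import Mathlib


open Finset

variable {F : Type*} [Field F] [Fintype F] [DecidableEq F]

/-- Finite-field binomial coefficient `[A choose B] = B(-1) * J(A, B⁻¹)`. -/
noncomputable def ffBinom (A B : MulChar F ℂ) : ℂ :=
  B (-1) * jacobiSum A B⁻¹

/-- Finite-field Gauss hypergeometric function
`₂F₁[A,B;C;x] = ε(x)·(BC)(-1)·∑_u B(u)(B̅C)(1-u)A̅(1-ux)`. -/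
noncomputable def ffHyp (A B C : MulChar F ℂ) (x : F) : ℂ :=
  (1 : MulChar F ℂ) x * (B * C) (-1) *
    ∑ u : F, B u * (B⁻¹ * C) (1 - u) * A⁻¹ (1 - u * x)

/-- Finite-field Appell function
`F₁(A;B,B';C;x,y) = ε(xy)·(AC)(-1)·∑_u A(u)(A̅C)(1-u)B̅(1-ux)B̅'(1-uy)`. -/
noncomputable def ffAppellF1 (A B B' C : MulChar F ℂ) (x y : F) : ℂ :=
  (1 : MulChar F ℂ) (x * y) * (A * C) (-1) *
    ∑ u : F, A u * (A⁻¹ * C) (1 - u) * B⁻¹ (1 - u * x) * B'⁻¹ (1 - u * y)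

/-- δ(0)=1, δ(t)=0 otherwise. -/
noncomputable def ffDelta (x : F) : ℂ := if x = 0 then 1 else 0

theorem stmt12 (B A C : MulChar F ℂ) (x : F) (hx : x ≠ 1) :
    ffHyp B A C x = C (-1) * B⁻¹ (1 - x) * ffHyp B (A⁻¹ * C) C (x / (x - 1)) := by
  have hs : x - 1 ≠ 0 := sub_ne_zero.mpr hx
  have hε : (1 : MulChar F ℂ) (x / (x - 1)) = (1 : MulChar F ℂ) x := by
    rcases eq_or_ne x 0 with h | h
    · simp [h]
    · rw [MulChar.one_apply (isUnit_iff_ne_zero.mpr (div_ne_zero h hs)),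
        MulChar.one_apply (isUnit_iff_ne_zero.mpr h)]
  have hA : ((A⁻¹ * C)⁻¹ * C) = A := by rw [mul_inv, inv_inv, mul_assoc, inv_mul_cancel, mul_one]
  have hACC : ((A⁻¹ * C) * C) (-1 : F) = A (-1) := by
    have hC : C (-1 : F) * C (-1) = 1 := by
      rw [← map_mul, neg_mul_neg, one_mul, MulChar.map_one]
    have hAinv : (A⁻¹ : MulChar F ℂ) (-1 : F) = A (-1) := by
      rw [MulChar.inv_apply', inv_neg, inv_one]
    rw [MulChar.mul_apply, MulChar.mul_apply, hAinv, mul_assoc, hC, mul_one]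
  have hB : ∀ u : F, B⁻¹ (1 - x) * B⁻¹ (1 - (1 - u) * (x / (x - 1))) =
      B⁻¹ (1 - u * x) := by
    intro u
    rw [← map_mul]
    congr 1
    field_simp
    ring
  unfold ffHyp
  rw [← Equiv.sum_comp (Equiv.subLeft (1 : F))
    (fun u => (A⁻¹ * C) u * ((A⁻¹ * C)⁻¹ * C) (1 - u) * B⁻¹ (1 - u * (x / (x - 1))))]
  simp only [Equiv.subLeft_apply, sub_sub_cancel, hA, hACC, hε]
  simp only [Finset.mul_sum]
  apply Finset.sum_congr rfl
  intro u _
  have := hB u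
  calc (1 : MulChar F ℂ) x * (A * C) (-1) * (A u * (A⁻¹ * C) (1 - u) * B⁻¹ (1 - u * x))
      = (1 : MulChar F ℂ) x * (A (-1) * C (-1)) *
        (A u * (A⁻¹ * C) (1 - u) * (B⁻¹ (1 - x) * B⁻¹ (1 - (1 - u) * (x / (x - 1))))) := by
        rw [hB u, MulChar.mul_apply]
    _ = C (-1) * B⁻¹ (1 - x) *
        ((1 : MulChar F ℂ) x * A (-1) * ((A⁻¹ * C) (1 - u) * A u *
          B⁻¹ (1 - (1 - u) * (x / (x - 1))))) := by ring
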